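/- Let n ≥ 5 be an integer, let k be an even integer with 2 ≤ k ≤ n−3, and let p ∈ [0,1]. On the vertex set {0,1,…,n−1} assign to each unordered pair {i,j} of distinct vertices the weight w(i,j) = 1−p if the ring distance satisfies d(i,j) ≤ k/2, and w(i,j) = p·k/(n−k−1) if d(i,j) > k/2. Then for any two distinct vertices s and t, the minimum over all subsets S with s ∈ S and t ∉ S of the cut weight Σ_{i ∈ S, j ∉ S} w(i,j) equals k. -/

import Mathlib

open Finset

/-- The ring distance on vertices `{0, …, n-1}` arranged on a cycle:
`d(i,j) = min(|i-j|, n - |i-j|)`. -/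
def ringDist (n : ℕ) (i j : Fin n) : ℕ :=
  min (Nat.dist i.val j.val) (n - Nat.dist i.val j.val)

/-- Expected-capacity weights of the small-world network with rewiring:
lattice pairs (ring distance at most `k/2`) have weight `1-p`, other pairs weight
`p k / (n-k-1)`. -/
noncomputable def rewiringWeight (n k : ℕ) (p : ℝ) (i j : Fin n) : ℝ :=
  if ringDist n i j ≤ k / 2 then 1 - p else p * (k : ℝ) / ((n : ℝ) - (k : ℝ) - 1)

set_option linter.unusedSectionVars false

namespace Stmt9

open scoped Fin.NatCast Fin.CommRing

variable {n : ℕ} [NeZero n]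


variable {n : ℕ} [NeZero n]

/-- `S` is invariant under shifting by `x`. -/
def per (S : Finset (Fin n)) (x : Fin n) : Prop := ∀ i : Fin n, i + x ∈ S ↔ i ∈ S

lemma per_zero (S : Finset (Fin n)) : per S 0 := fun i => by simp

lemma per_add {S : Finset (Fin n)} {x y : Fin n} (hx : per S x) (hy : per S y) :
    per S (x + y) := by
  intro i
  rw [← add_assoc]
  exact (hy (i + x)).trans (hx i)

lemma per_neg {S : Finset (Fin n)} {x : Fin n} (hx : per S x) : per S (-x) := by
  intro i
  have h := hx (i + -x)
  simpa using h.symm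

lemma per_sub {S : Finset (Fin n)} {x y : Fin n} (hx : per S x) (hy : per S y) :
    per S (x - y) := by
  rw [sub_eq_add_neg]; exact per_add hx (per_neg hy)

lemma per_of_forall {S : Finset (Fin n)} {d : Fin n} (h : ∀ i ∈ S, i + d ∈ S) :
    per S d := by
  have himg : S.image (· + d) = S := by
    apply Finset.eq_of_subset_of_card_le
    · intro x hx
      simp only [Finset.mem_image] at hx
      obtain ⟨i, hi, rfl⟩ := hx
      exact h i hi
    · rw [Finset.card_image_of_injective _ (add_left_injective d)]
  intro i
  constructor
  · intro hi
    rw [← himg] at hi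
    simp only [Finset.mem_image] at hi
    obtain ⟨j, hj, hji⟩ := hi
    have : j = i := add_left_injective d hji
    exact this ▸ hj
  · exact h i

lemma per_nsmul {S : Finset (Fin n)} (h1 : per S 1) : ∀ e : ℕ, per S (e : Fin n) := by
  intro e
  induction e with
  | zero => simpa using per_zero S
  | succ e ih => push_cast; exact per_add ih h1

/-- Main structural lemma: existence of a period `g ≥ 2` dividing `n` such that
whenever `g ∤ d.val`, the boundary set at shift `d` has at least `n/g` elements. -/
lemma exists_period (S : Finset (Fin n)) (s t : Fin n) (hs : s ∈ S) (ht : t ∉ S) :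
    ∃ g h : ℕ, 2 ≤ g ∧ n = g * h ∧ 1 ≤ h ∧
      ∀ d : Fin n, ¬ (g ∣ d.val) → h ≤ (S.filter fun i => i + d ∉ S).card := by
  classical
  have hn0 : 0 < n := Nat.pos_of_ne_zero (NeZero.ne n)
  have hex : ∃ e : ℕ, 0 < e ∧ per S (e : Fin n) := by
    refine ⟨n, hn0, ?_⟩
    rw [Fin.natCast_self]; exact per_zero S
  set g := Nat.find hex with hgdef
  obtain ⟨hgpos, hgper⟩ := Nat.find_spec hex
  have hdvd : ∀ e : ℕ, per S (e : Fin n) → g ∣ e := by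
    intro e
    induction e using Nat.strong_induction_on with
    | _ e ih =>
      intro he
      rcases Nat.eq_zero_or_pos e with rfl | hpos
      · exact dvd_zero g
      · have hge : g ≤ e := Nat.find_min' hex ⟨hpos, he⟩
        have hper' : per S ((e - g : ℕ) : Fin n) := by
          rw [Nat.cast_sub hge]
          exact per_sub he hgper
        have hdvd' : g ∣ (e - g) := by
          rcases Nat.eq_zero_or_pos (e - g) with h0 | hpos'
          · rw [h0]; exact dvd_zero g
          · exact ih (e - g) (by omega) hper'
        obtain ⟨c, hc⟩ := hdvd'
        exact ⟨c + 1, by rw [Nat.mul_add, ← hc]; omega⟩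
  have hgn : g ∣ n := hdvd n (by rw [Fin.natCast_self]; exact per_zero S)
  have hgne : g ≤ n := Nat.le_of_dvd hn0 hgn
  have hg2 : 2 ≤ g := by
    by_contra hcon
    have hg1 : g = 1 := by omega
    have h1 : per S (1 : Fin n) := by
      rw [← Nat.cast_one (R := Fin n), ← hg1]; exact hgper
    have hall : per S (t - s) := by
      have := per_nsmul h1 (t - s).val
      rwa [Fin.cast_val_eq_self] at this
    have hts : s + (t - s) = t := by ring
    exact ht ((hts ▸ hall s).mpr hs)
  refine ⟨g, n / g, hg2, (Nat.mul_div_cancel' hgn).symm, by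
      have := Nat.div_pos hgne (by omega); omega, ?_⟩
  intro d hd
  have hnper : ¬ per S d := by
    intro hp
    exact hd (hdvd d.val (by rwa [Fin.cast_val_eq_self]))
  set B := S.filter fun i => i + d ∉ S with hB
  have hne : B.Nonempty := by
    rw [hB, Finset.filter_nonempty_iff]
    by_contra hcon
    push_neg at hcon
    exact hnper (per_of_forall fun i hi => hcon i hi)
  obtain ⟨i₀, hi₀⟩ := hne
  have hBg : ∀ i ∈ B, i + (g : Fin n) ∈ B := by
    intro i hi
    simp only [hB, Finset.mem_filter] at hi ⊢
    refine ⟨(hgper i).mpr hi.1, fun hcon => hi.2 ?_⟩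
    have heq : i + (g : Fin n) + d = i + d + (g : Fin n) := by ring
    rw [heq] at hcon
    exact (hgper (i + d)).mp hcon
  have hmem : ∀ j : ℕ, j < n / g → i₀ + ((j * g : ℕ) : Fin n) ∈ B := by
    intro j
    induction j with
    | zero => intro _; simpa using hi₀
    | succ j ih =>
      intro hj
      have h1 := hBg _ (ih (by omega))
      have h2 : ((j + 1) * g : ℕ) = (j * g : ℕ) + g := by ring
      rw [h2, Nat.cast_add, ← add_assoc]
      exact h1
  have hval : ∀ j : ℕ, j < n / g → ((j * g : ℕ) : Fin n).val = j * g := by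
    intro j hj
    rw [Fin.val_natCast]
    apply Nat.mod_eq_of_lt
    calc j * g < (n / g) * g := Nat.mul_lt_mul_of_pos_right hj hgpos
      _ ≤ n := Nat.div_mul_le_self n g
  calc n / g = (Finset.range (n / g)).card := (Finset.card_range _).symm
    _ ≤ B.card := by
        apply Finset.card_le_card_of_injOn (fun j => i₀ + ((j * g : ℕ) : Fin n))
        · intro j hj
          exact hmem j (Finset.mem_range.mp hj)
        · intro j1 h1 j2 h2 heq
          simp only [Finset.coe_range, Set.mem_Iio] at h1 h2
          have := add_right_injective i₀ heq
          have hv : j1 * g = j2 * g := by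
            rw [← hval j1 h1, ← hval j2 h2, this]
          exact Nat.eq_of_mul_eq_mul_right (by omega) hv





lemma ringDist_shift (i d : Fin n) : ringDist n i (i + d) = min d.val (n - d.val) := by
  have h1 : i.val < n := i.isLt
  have h2 : d.val < n := d.isLt
  have hv : (i + d).val = (i.val + d.val) % n := Fin.val_add i d
  unfold ringDist
  rcases Nat.lt_or_ge (i.val + d.val) n with hlt | hge
  · rw [hv, Nat.mod_eq_of_lt hlt, Nat.dist]
    rw [Nat.min_def, Nat.min_def]
    split_ifs <;> omega
  · have hmod : (i.val + d.val) % n = i.val + d.val - n := by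
      rw [Nat.mod_eq_sub_mod hge, Nat.mod_eq_of_lt (by omega)]
    rw [hv, hmod, Nat.dist]
    rw [Nat.min_def, Nat.min_def]
    split_ifs <;> omega

lemma cut_eq (k : ℕ) (p : ℝ) (S : Finset (Fin n)) :
    ∑ i ∈ S, ∑ j ∈ Sᶜ, rewiringWeight n k p i j
      = ∑ d ∈ Finset.univ.erase (0 : Fin n),
          ((S.filter fun i => i + d ∉ S).card : ℝ) *
            (if min d.val (n - d.val) ≤ k / 2 then 1 - p
             else p * (k : ℝ) / ((n : ℝ) - (k : ℝ) - 1)) := by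
  classical
  calc ∑ i ∈ S, ∑ j ∈ Sᶜ, rewiringWeight n k p i j
      = ∑ x ∈ S ×ˢ Sᶜ, rewiringWeight n k p x.1 x.2 := by
        rw [Finset.sum_product]
    _ = ∑ x ∈ (Finset.univ.erase (0 : Fin n)).sigma
          (fun d => S.filter fun i => i + d ∉ S),
          rewiringWeight n k p x.2 (x.2 + x.1) := by
        apply Finset.sum_nbij' (i := fun x => (⟨x.2 - x.1, x.1⟩ : Σ _ : Fin n, Fin n))
          (j := fun x => (x.2, x.2 + x.1))
        · intro x hx
          simp only [Finset.mem_product, Finset.mem_compl] at hx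
          simp only [Finset.mem_sigma, Finset.mem_erase, Finset.mem_filter,
            Finset.mem_univ, and_true]
          refine ⟨?_, hx.1, ?_⟩
          · intro h0
            exact hx.2 ((sub_eq_zero.mp h0) ▸ hx.1)
          · have : x.1 + (x.2 - x.1) = x.2 := by ring
            rw [this]
            exact hx.2
        · intro x hx
          simp only [Finset.mem_sigma, Finset.mem_erase, Finset.mem_filter] at hx
          simp only [Finset.mem_product, Finset.mem_compl]
          exact ⟨hx.2.1, hx.2.2⟩
        · intro x hx
          simp only
          have : x.1 + (x.2 - x.1) = x.2 := by ring
          exact Prod.ext rfl this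
        · intro x hx
          simp only
          have : x.2 + x.1 - x.2 = x.1 := by ring
          exact Sigma.ext this (by simp)
        · intro x hx
          have : x.1 + (x.2 - x.1) = x.2 := by ring
          simp only [this]
    _ = ∑ d ∈ Finset.univ.erase (0 : Fin n),
          ∑ i ∈ S.filter (fun i => i + d ∉ S), rewiringWeight n k p i (i + d) := by
        rw [Finset.sum_sigma]
    _ = _ := by
        refine Finset.sum_congr rfl fun d hd => ?_
        rw [Finset.sum_congr rfl (fun i _ => by
          unfold rewiringWeight
          rw [ringDist_shift]), Finset.sum_const, nsmul_eq_mul]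





lemma card_filter_val (Q : ℕ → Prop) [DecidablePred Q] :
    (Finset.univ.filter fun d : Fin n => Q d.val).card
      = ((Finset.range n).filter Q).card := by
  apply Finset.card_bij (fun d _ => d.val)
  · intro a ha
    simp only [Finset.mem_filter, Finset.mem_univ, true_and] at ha
    simp only [Finset.mem_filter, Finset.mem_range]
    exact ⟨a.isLt, ha⟩
  · intro a _ b _ h
    exact Fin.val_injective h
  · intro b hb
    simp only [Finset.mem_filter, Finset.mem_range] at hb
    exact ⟨⟨b, hb.1⟩, by simp [hb.2], rfl⟩

lemma latticeVals_card (m : ℕ) (hm1 : 1 ≤ m) (h2m : 2 * m < n) :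
    ((Finset.range n).filter fun v => ¬ v = 0 ∧ min v (n - v) ≤ m).card = 2 * m := by
  have hset : ((Finset.range n).filter fun v => ¬ v = 0 ∧ min v (n - v) ≤ m)
      = Finset.Ico 1 (m + 1) ∪ Finset.Ico (n - m) n := by
    ext v
    simp only [Finset.mem_filter, Finset.mem_range, Finset.mem_union, Finset.mem_Ico]
    omega
  rw [hset, Finset.card_union_of_disjoint (by
    rw [Finset.disjoint_left]
    intro v hv hv'
    simp only [Finset.mem_Ico] at hv hv'
    omega)]
  rw [Nat.card_Ico, Nat.card_Ico]
  omega

lemma latticeMult_card_le (m g : ℕ) (hg : 0 < g) (hgn : g ∣ n) (h2m : 2 * m < n) :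
    ((Finset.range n).filter fun v => (¬ v = 0 ∧ min v (n - v) ≤ m) ∧ g ∣ v).card
      ≤ 2 * (m / g) := by
  have hsub : ((Finset.range n).filter fun v => (¬ v = 0 ∧ min v (n - v) ≤ m) ∧ g ∣ v)
      ⊆ ((Finset.Icc 1 (m / g)).image fun j => g * j)
        ∪ ((Finset.Icc 1 (m / g)).image fun j => n - g * j) := by
    intro v hv
    simp only [Finset.mem_filter, Finset.mem_range] at hv
    obtain ⟨hvn, ⟨hv0, hmin⟩, j, rfl⟩ := hv
    simp only [Finset.mem_union, Finset.mem_image, Finset.mem_Icc]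
    have hj1 : 1 ≤ j := Nat.pos_of_ne_zero fun h => hv0 (by simp [h])
    rcases min_le_iff.mp hmin with hle | hge
    · left
      refine ⟨j, ⟨hj1, ?_⟩, rfl⟩
      rw [Nat.le_div_iff_mul_le hg, Nat.mul_comm]
      exact hle
    · right
      obtain ⟨h', rfl⟩ := hgn
      have hj' : j ≤ h' := by
        by_contra hcon
        push_neg at hcon
        have h1 : g * (h' + 1) ≤ g * j := Nat.mul_le_mul_left g hcon
        have h2 : g * (h' + 1) = g * h' + g := Nat.mul_succ g h'
        omega
      have hsub' : g * (h' - j) = g * h' - g * j := Nat.mul_sub g h' j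
      have hjlt : j < h' := by
        rcases Nat.lt_or_ge j h' with hl | hgeq
        · exact hl
        · have : j = h' := le_antisymm hj' hgeq
          subst this
          omega
      refine ⟨h' - j, ⟨by omega, ?_⟩, by rw [hsub']; omega⟩
      rw [Nat.le_div_iff_mul_le hg, Nat.mul_comm, hsub']
      exact hge
  calc ((Finset.range n).filter fun v => (¬ v = 0 ∧ min v (n - v) ≤ m) ∧ g ∣ v).card
      ≤ _ := Finset.card_le_card hsub
    _ ≤ ((Finset.Icc 1 (m / g)).image fun j => g * j).card
        + ((Finset.Icc 1 (m / g)).image fun j => n - g * j).card :=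
        Finset.card_union_le _ _
    _ ≤ (Finset.Icc 1 (m / g)).card + (Finset.Icc 1 (m / g)).card :=
        Nat.add_le_add Finset.card_image_le Finset.card_image_le
    _ ≤ 2 * (m / g) := by rw [Nat.card_Icc]; omega

lemma nonlatticeMult_card_le (m g h : ℕ) (hg : 2 ≤ g) (hn : n = g * h)
    (h2m : 2 * m + 3 ≤ n) (hm1 : 1 ≤ m) :
    ((Finset.range n).filter fun v => (¬ v = 0 ∧ ¬ min v (n - v) ≤ m) ∧ g ∣ v).card
      ≤ h - 1 - (m / g) - (m / g) := by
  have hdm := Nat.div_add_mod m g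
  have hmod : m % g < g := Nat.mod_lt _ (by omega)
  have hF1 : g * (m / g) ≤ m := by omega
  have hF2 : m < g * (m / g) + g := by omega
  have hFh : m / g + 1 ≤ h := by
    have h1 : g * (m / g) < g * h := by omega
    exact Nat.lt_of_mul_lt_mul_left h1
  have hmulle : g * (m / g + 1) ≤ g * h := Nat.mul_le_mul_left g hFh
  have hmulsucc : g * (m / g + 1) = g * (m / g) + g := Nat.mul_succ g (m / g)
  have hquot : (n - m - 1) / g = h - 1 - m / g := by
    have hmul : g * (h - m / g - 1) = g * h - g * (m / g) - g * 1 := by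
      rw [Nat.mul_sub, Nat.mul_sub]
    have e1 : n - m - 1 = g * (h - m / g - 1) + (g - m % g - 1) := by omega
    rw [e1, Nat.mul_add_div (by omega)]
    have h0 : (g - m % g - 1) / g = 0 := Nat.div_eq_of_lt (by omega)
    omega
  have hsub : ((Finset.range n).filter fun v => (¬ v = 0 ∧ ¬ min v (n - v) ≤ m) ∧ g ∣ v)
      ⊆ (Finset.Icc (m / g + 1) (h - 1 - m / g)).image fun j => g * j := by
    intro v hv
    simp only [Finset.mem_filter, Finset.mem_range] at hv
    obtain ⟨hvn, ⟨hv0, hmin⟩, j, rfl⟩ := hv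
    push_neg at hmin
    have hvm : m < g * j := (lt_min_iff.mp hmin).1
    have hnv : m < n - g * j := (lt_min_iff.mp hmin).2
    simp only [Finset.mem_image, Finset.mem_Icc]
    refine ⟨j, ⟨?_, ?_⟩, rfl⟩
    · have : g * (m / g) < g * j := by omega
      exact Nat.lt_of_mul_lt_mul_left this
    · have hle : g * j ≤ n - m - 1 := by omega
      rw [← hquot, Nat.le_div_iff_mul_le (by omega : 0 < g), Nat.mul_comm]
      exact hle
  calc ((Finset.range n).filter fun v => (¬ v = 0 ∧ ¬ min v (n - v) ≤ m) ∧ g ∣ v).card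
      ≤ _ := Finset.card_le_card hsub
    _ ≤ (Finset.Icc (m / g + 1) (h - 1 - m / g)).card := Finset.card_image_le
    _ ≤ h - 1 - m / g - m / g := by rw [Nat.card_Icc]; omega



lemma arith1 (g h m F : ℕ) (hg : 2 ≤ g) (hh : 1 ≤ h) (hn : 2 * m + 3 ≤ g * h)
    (hF1 : g * F ≤ m) (hF2 : m < g * F + g) (hm1 : 1 ≤ m) :
    2 * m ≤ h * (2 * m - 2 * F) := by
  have h2F : F + F ≤ m := by
    have : 2 * F ≤ g * F := Nat.mul_le_mul_right F hg
    omega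
  rcases Nat.lt_or_ge h 2 with hh1 | hh2
  · have hh1' : h = 1 := by omega
    subst hh1'
    have hF0 : F = 0 := by
      by_contra hcon
      have : g * 1 ≤ g * F := Nat.mul_le_mul_left g (by omega)
      omega
    subst hF0
    omega
  · calc 2 * m ≤ 2 * (2 * m - 2 * F) := by omega
      _ ≤ h * (2 * m - 2 * F) := Nat.mul_le_mul_right _ hh2

lemma arith2coreA (h L0 : ℤ) (hh : 2 ≤ h) (hL0 : 2 ≤ L0) : L0 ≤ h * (L0 - 1) := by
  have e : h * (L0 - 1) - L0 = (h - 1) * (L0 - 2) + (h - 2) := by ring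
  nlinarith [mul_nonneg (show (0:ℤ) ≤ h - 1 by omega) (show (0:ℤ) ≤ L0 - 2 by omega)]

lemma arith2coreB (h A L0 : ℤ) (hh : 3 ≤ h) (hA : 2 ≤ A) (hL0 : 2 * A - 1 ≤ L0) :
    L0 ≤ h * (L0 - A) := by
  have e : h * (L0 - A) - L0 = (h - 1) * (L0 - (2 * A - 1)) + ((A - 1) * (h - 2) - 1) := by
    ring
  have h1 : (0:ℤ) ≤ (h - 1) * (L0 - (2 * A - 1)) :=
    mul_nonneg (by omega) (by omega)
  have h2 : (1:ℤ) * 1 ≤ (A - 1) * (h - 2) :=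
    mul_le_mul (by omega) (by omega) (by norm_num) (by omega)
  linarith

lemma arith2 (g h m F L0 M : ℕ) (hg : 2 ≤ g) (hF1 : g * F ≤ m) (hF2 : m < g * F + g)
    (hL0 : L0 + 2 * m + 1 = g * h) (hL02 : 2 ≤ L0) (hM1 : M ≤ L0)
    (hM2 : M ≤ h - 1 - F - F) (hm1 : 1 ≤ m) :
    L0 ≤ h * (L0 - M) := by
  have hh1 : 1 ≤ h := by
    rcases Nat.eq_zero_or_pos h with rfl | h1
    · omega
    · exact h1
  rcases Nat.eq_zero_or_pos M with rfl | hM0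
  · simp only [Nat.sub_zero]
    exact Nat.le_mul_of_pos_left L0 hh1
  have hhF : 2 * F + 1 + M ≤ h := by omega
  zify [hM1]
  have hgz : (2 : ℤ) ≤ (g : ℤ) := by exact_mod_cast hg
  have hF1z : (g : ℤ) * F ≤ (m : ℤ) := by exact_mod_cast hF1
  have hF2z : (m : ℤ) < (g : ℤ) * F + g := by exact_mod_cast hF2
  have hL0z : (L0 : ℤ) + 2 * m + 1 = (g : ℤ) * h := by exact_mod_cast hL0
  have hL02z : (2 : ℤ) ≤ (L0 : ℤ) := by exact_mod_cast hL02
  have hM1z : (M : ℤ) ≤ (L0 : ℤ) := by exact_mod_cast hM1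
  have hhFz : 2 * (F : ℤ) + 1 + (M : ℤ) ≤ (h : ℤ) := by exact_mod_cast hhF
  have hM0z : (1 : ℤ) ≤ (M : ℤ) := by exact_mod_cast hM0
  have hF0 : (0 : ℤ) ≤ (F : ℤ) := by positivity
  set A : ℤ := (h : ℤ) - 2 * F - 1 with hAdef
  have hMA : (M : ℤ) ≤ A := by omega
  have hA1 : 1 ≤ A := by omega
  have hstep1 : (h : ℤ) * ((L0 : ℤ) - A) ≤ (h : ℤ) * ((L0 : ℤ) - M) :=
    mul_le_mul_of_nonneg_left (by omega) (by positivity)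
  have hL0low : (g : ℤ) * (A - 1) + 1 ≤ (L0 : ℤ) := by
    have hexp : (g : ℤ) * (A - 1) = (g : ℤ) * h - 2 * ((g : ℤ) * F) - 2 * g := by
      rw [hAdef]; ring
    omega
  have hmain : (L0 : ℤ) ≤ (h : ℤ) * ((L0 : ℤ) - A) := by
    rcases le_or_gt A 1 with hA2 | hA2
    · have hAe : A = 1 := le_antisymm hA2 hA1
      rw [hAe]
      exact arith2coreA _ _ (by omega) hL02z
    · have hgA : 2 * (A - 1) ≤ (g : ℤ) * (A - 1) :=
        mul_le_mul_of_nonneg_right hgz (by omega)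
      exact arith2coreB _ _ _ (by omega) (by omega) (by omega)
  linarith


end Stmt9

/-- the computation of `c_min = k` in the paper's Theorem 3.
In the expected-capacity graph of the small-world network with rewiring, the minimum
`s`-`t` cut weight equals `k`, for any distinct `s`, `t`. -/
theorem stmt_9 (n k : ℕ) (hn : 5 ≤ n) (hk2 : 2 ≤ k) (hk : k ≤ n - 3) (hke : Even k)
    (p : ℝ) (hp0 : 0 ≤ p) (hp1 : p ≤ 1)
    (s t : Fin n) (hst : s ≠ t) :
    IsLeast {x : ℝ | ∃ S : Finset (Fin n), s ∈ S ∧ t ∉ S ∧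
        x = ∑ i ∈ S, ∑ j ∈ Sᶜ, rewiringWeight n k p i j}
      (k : ℝ) := by
  classical
  haveI : NeZero n := ⟨by omega⟩
  have hk2m : 2 * (k / 2) = k := Nat.mul_div_cancel' hke.two_dvd
  have hm1 : 1 ≤ k / 2 := by omega
  have h2m3 : 2 * (k / 2) + 3 ≤ n := by omega
  have hkn : k + 3 ≤ n := by omega
  have hden : ((n : ℝ) - k - 1) ≠ 0 := by
    have : (k : ℝ) + 3 ≤ (n : ℝ) := by exact_mod_cast hkn
    linarith
  have hdenpos : (0 : ℝ) < (n : ℝ) - k - 1 := by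
    have : (k : ℝ) + 3 ≤ (n : ℝ) := by exact_mod_cast hkn
    linarith
  have hq0 : 0 ≤ p * (k : ℝ) / ((n : ℝ) - k - 1) :=
    div_nonneg (mul_nonneg hp0 (Nat.cast_nonneg k)) hdenpos.le
  have hv0 : ∀ d : Fin n, (d = 0) ↔ (d.val = 0) :=
    fun d => ⟨fun h => by simp [h], fun h => Fin.ext h⟩
  -- the two distance classes
  set E : Finset (Fin n) := Finset.univ.erase (0 : Fin n) with hE
  set Lf : Finset (Fin n) := E.filter (fun d => min d.val (n - d.val) ≤ k / 2) with hLfdef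
  set Cf : Finset (Fin n) := E.filter (fun d => ¬ min d.val (n - d.val) ≤ k / 2) with hCfdef
  have hLfeq : Lf = Finset.univ.filter
      (fun d : Fin n => ¬ d.val = 0 ∧ min d.val (n - d.val) ≤ k / 2) := by
    ext d
    simp only [hLfdef, hE, Finset.mem_filter, Finset.mem_erase, Finset.mem_univ, true_and,
      and_true]
    rw [ne_eq, hv0 d]
  have hCfeq : Cf = Finset.univ.filter
      (fun d : Fin n => ¬ d.val = 0 ∧ ¬ min d.val (n - d.val) ≤ k / 2) := by
    ext d
    simp only [hCfdef, hE, Finset.mem_filter, Finset.mem_erase, Finset.mem_univ, true_and,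
      and_true]
    rw [ne_eq, hv0 d]
  have hLfcard : Lf.card = 2 * (k / 2) := by
    rw [hLfeq]
    exact (Stmt9.card_filter_val (fun v => ¬ v = 0 ∧ min v (n - v) ≤ k / 2)).trans
      (Stmt9.latticeVals_card (k / 2) hm1 (by omega))
  have hEcard : E.card = n - 1 := by
    rw [hE, Finset.card_erase_of_mem (Finset.mem_univ _), Finset.card_univ, Fintype.card_fin]
  have hsum_card : Lf.card + Cf.card = n - 1 := by
    rw [hLfdef, hCfdef, ← hEcard]
    exact Finset.card_filter_add_card_filter_not _
  have hCfcard : Cf.card = n - 1 - 2 * (k / 2) := by omega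
  -- the cut decomposition
  have hsplit : ∀ S : Finset (Fin n),
      ∑ i ∈ S, ∑ j ∈ Sᶜ, rewiringWeight n k p i j
        = ((∑ d ∈ Lf, (S.filter fun i => i + d ∉ S).card : ℕ) : ℝ) * (1 - p)
          + ((∑ d ∈ Cf, (S.filter fun i => i + d ∉ S).card : ℕ) : ℝ)
            * (p * (k : ℝ) / ((n : ℝ) - k - 1)) := by
    intro S
    rw [Stmt9.cut_eq k p S]
    rw [← Finset.sum_filter_add_sum_filter_not (Finset.univ.erase (0 : Fin n))
      (fun d => min d.val (n - d.val) ≤ k / 2)]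
    congr 1
    · rw [Finset.sum_congr rfl (fun d hd => ?_), ← Finset.sum_mul, Nat.cast_sum]
      rw [Finset.mem_filter] at hd
      rw [if_pos hd.2]
    · rw [Finset.sum_congr rfl (fun d hd => ?_), ← Finset.sum_mul, Nat.cast_sum]
      rw [Finset.mem_filter] at hd
      rw [if_neg hd.2]
  constructor
  · -- membership : the singleton cut
    refine ⟨{s}, Finset.mem_singleton_self s, fun h => hst (Finset.mem_singleton.mp h).symm, ?_⟩
    rw [hsplit {s}]
    have hone : ∀ d ∈ E, (({s} : Finset (Fin n)).filter fun i => i + d ∉ ({s} : Finset (Fin n))).card = 1 := by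
      intro d hd
      rw [hE, Finset.mem_erase] at hd
      have hcond : s + d ∉ ({s} : Finset (Fin n)) := by
        rw [Finset.mem_singleton]
        intro hcon
        exact hd.1 (add_eq_left.mp hcon)
      rw [Finset.filter_singleton, if_pos hcond, Finset.card_singleton]
    have hL1 : ∑ d ∈ Lf, (({s} : Finset (Fin n)).filter fun i => i + d ∉ ({s} : Finset (Fin n))).card
        = 2 * (k / 2) := by
      rw [Finset.sum_congr rfl (fun d hd => hone d (Finset.mem_of_mem_filter d hd)),
        Finset.sum_const, smul_eq_mul, mul_one, hLfcard]
    have hC1 : ∑ d ∈ Cf, (({s} : Finset (Fin n)).filter fun i => i + d ∉ ({s} : Finset (Fin n))).card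
        = n - 1 - 2 * (k / 2) := by
      rw [Finset.sum_congr rfl (fun d hd => hone d (Finset.mem_of_mem_filter d hd)),
        Finset.sum_const, smul_eq_mul, mul_one, hCfcard]
    rw [hL1, hC1]
    have hc1 : ((2 * (k / 2) : ℕ) : ℝ) = (k : ℝ) := by exact_mod_cast congrArg (fun x : ℕ => (x : ℝ)) hk2m
    have hc2 : ((n - 1 - 2 * (k / 2) : ℕ) : ℝ) = (n : ℝ) - k - 1 := by
      have : (n - 1 - 2 * (k / 2) : ℕ) = n - (k + 1) := by omega
      rw [this, Nat.cast_sub (by omega)]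
      push_cast
      ring
    rw [hc1, hc2]
    field_simp
    ring
  · -- lower bound
    rintro x ⟨S, hsS, htS, rfl⟩
    obtain ⟨g, h, hg2, hn_eq, hh1, hkey⟩ := Stmt9.exists_period S s t hsS htS
    have hgn : g ∣ n := ⟨h, hn_eq⟩
    have hdm := Nat.div_add_mod (k / 2) g
    have hmodlt : (k / 2) % g < g := Nat.mod_lt _ (by omega)
    have hF1 : g * ((k / 2) / g) ≤ k / 2 := by omega
    have hF2 : k / 2 < g * ((k / 2) / g) + g := by omega
    -- lattice side
    have hLmult : (Lf.filter fun d => g ∣ d.val).card ≤ 2 * ((k / 2) / g) := by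
      have : Lf.filter (fun d => g ∣ d.val) = Finset.univ.filter
          (fun d : Fin n => (¬ d.val = 0 ∧ min d.val (n - d.val) ≤ k / 2) ∧ g ∣ d.val) := by
        rw [hLfeq, Finset.filter_filter]
      rw [this, Stmt9.card_filter_val (fun v => (¬ v = 0 ∧ min v (n - v) ≤ k / 2) ∧ g ∣ v)]
      exact Stmt9.latticeMult_card_le (k / 2) g (by omega) hgn (by omega)
    have hLsplit : (Lf.filter fun d => g ∣ d.val).card
        + (Lf.filter fun d => ¬ g ∣ d.val).card = 2 * (k / 2) := by
      rw [← hLfcard]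
      exact Finset.card_filter_add_card_filter_not _
    have hLnon : 2 * (k / 2) - 2 * ((k / 2) / g) ≤ (Lf.filter fun d => ¬ g ∣ d.val).card := by
      omega
    have hEL : 2 * (k / 2) ≤ ∑ d ∈ Lf, (S.filter fun i => i + d ∉ S).card := by
      calc 2 * (k / 2) ≤ h * (2 * (k / 2) - 2 * ((k / 2) / g)) :=
            Stmt9.arith1 g h (k / 2) ((k / 2) / g) hg2 hh1 (by omega) hF1 hF2 hm1
        _ ≤ h * (Lf.filter fun d => ¬ g ∣ d.val).card := Nat.mul_le_mul_left h hLnon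
        _ ≤ ∑ d ∈ Lf.filter (fun d => ¬ g ∣ d.val), (S.filter fun i => i + d ∉ S).card := by
            have hns := Finset.card_nsmul_le_sum (Lf.filter fun d => ¬ g ∣ d.val)
              (fun d => (S.filter fun i => i + d ∉ S).card) h
              (fun d hd => hkey d (Finset.mem_filter.mp hd).2)
            rw [smul_eq_mul, Nat.mul_comm] at hns
            exact hns
        _ ≤ ∑ d ∈ Lf, (S.filter fun i => i + d ∉ S).card :=
            Finset.sum_le_sum_of_subset (Finset.filter_subset _ _)
    -- non-lattice side
    have hCmult : (Cf.filter fun d => g ∣ d.val).card ≤ h - 1 - (k / 2) / g - (k / 2) / g := by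
      have : Cf.filter (fun d => g ∣ d.val) = Finset.univ.filter
          (fun d : Fin n => (¬ d.val = 0 ∧ ¬ min d.val (n - d.val) ≤ k / 2) ∧ g ∣ d.val) := by
        rw [hCfeq, Finset.filter_filter]
      rw [this, Stmt9.card_filter_val (fun v => (¬ v = 0 ∧ ¬ min v (n - v) ≤ k / 2) ∧ g ∣ v)]
      exact Stmt9.nonlatticeMult_card_le (k / 2) g h hg2 hn_eq (by omega) hm1
    have hCsplit : (Cf.filter fun d => g ∣ d.val).card
        + (Cf.filter fun d => ¬ g ∣ d.val).card = n - 1 - 2 * (k / 2) := by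
      rw [← hCfcard]
      exact Finset.card_filter_add_card_filter_not _
    have hEC : n - 2 * (k / 2) - 1 ≤ ∑ d ∈ Cf, (S.filter fun i => i + d ∉ S).card := by
      have hM1 : (Cf.filter fun d => g ∣ d.val).card ≤ n - 2 * (k / 2) - 1 := by omega
      calc n - 2 * (k / 2) - 1
          ≤ h * ((n - 2 * (k / 2) - 1) - (Cf.filter fun d => g ∣ d.val).card) :=
            Stmt9.arith2 g h (k / 2) ((k / 2) / g) (n - 2 * (k / 2) - 1) _ hg2 hF1 hF2
              (by omega) (by omega) hM1 hCmult hm1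
        _ ≤ h * (Cf.filter fun d => ¬ g ∣ d.val).card := Nat.mul_le_mul_left h (by omega)
        _ ≤ ∑ d ∈ Cf.filter (fun d => ¬ g ∣ d.val), (S.filter fun i => i + d ∉ S).card := by
            have hns := Finset.card_nsmul_le_sum (Cf.filter fun d => ¬ g ∣ d.val)
              (fun d => (S.filter fun i => i + d ∉ S).card) h
              (fun d hd => hkey d (Finset.mem_filter.mp hd).2)
            rw [smul_eq_mul, Nat.mul_comm] at hns
            exact hns
        _ ≤ ∑ d ∈ Cf, (S.filter fun i => i + d ∉ S).card :=
            Finset.sum_le_sum_of_subset (Finset.filter_subset _ _)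
    -- finish over ℝ
    rw [hsplit S]
    have hELr : (k : ℝ) ≤ ((∑ d ∈ Lf, (S.filter fun i => i + d ∉ S).card : ℕ) : ℝ) := by
      have hELk : k ≤ ∑ d ∈ Lf, (S.filter fun i => i + d ∉ S).card := by omega
      exact_mod_cast hELk
    have hECr : (n : ℝ) - k - 1
        ≤ ((∑ d ∈ Cf, (S.filter fun i => i + d ∉ S).card : ℕ) : ℝ) := by
      have h1 : n - (k + 1) ≤ ∑ d ∈ Cf, (S.filter fun i => i + d ∉ S).card := by omega
      calc (n : ℝ) - k - 1 = ((n - (k + 1) : ℕ) : ℝ) := by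
            rw [Nat.cast_sub (by omega)]
            push_cast
            ring
        _ ≤ _ := by exact_mod_cast h1
    have h1p : (0 : ℝ) ≤ 1 - p := by linarith
    have hqk : ((n : ℝ) - k - 1) * (p * (k : ℝ) / ((n : ℝ) - k - 1)) = p * k := by
      field_simp
    have t1 := mul_le_mul_of_nonneg_right hELr h1p
    have t2 := mul_le_mul_of_nonneg_right hECr hq0
    linarith [t1, t2, hqk]
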